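/- Let f be a quadratic Boolean function on n variables with associated graph G (adjacency matrix Γ where Γ_{i,j} = 1 iff the monomial x_i x_j occurs in f). Let A be an independent set of G of size α. Let s ∈ ℝ^{2^n} have entries s_x = 2^{-n/2}(−1)^{f(x)}, and let U be the tensor product applying the 2×2 Hadamard matrix H = (1/√2)[[1,1],[1,−1]] to the coordinates in A and the identity elsewhere. Then the vector S = U s has maximum squared coefficient magnitude max_k |S_k|^2 = 2^{α − n}. -/

import Mathlib

variable {V : Type*}

/-- Local complementation at vertex `v`: complement the induced subgraph on the
neighborhood of `v`, leaving all other adjacencies unchanged. -/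
def localComp (G : SimpleGraph V) (v : V) : SimpleGraph V where
  Adj x y := (G.Adj v x ∧ G.Adj v y ∧ ¬ G.Adj x y ∧ x ≠ y) ∨ (¬(G.Adj v x ∧ G.Adj v y) ∧ G.Adj x y)
  symm := by
    constructor
    intro x y h
    rcases h with ⟨h1, h2, h3, h4⟩ | ⟨h1, h2⟩
    · exact Or.inl ⟨h2, h1, fun h => h3 h.symm, h4.symm⟩
    · exact Or.inr ⟨fun h => h1 ⟨h.2, h.1⟩, h2.symm⟩
  loopless := by
    constructor
    intro x h
    rcases h with ⟨_, _, _, h4⟩ | ⟨_, h2⟩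
    · exact h4 rfl
    · exact G.irrefl h2

/-- `A` is an independent set of `G`: its vertices are pairwise non-adjacent. -/
def isIndep (G : SimpleGraph V) (A : Finset V) : Prop :=
  ∀ a ∈ A, ∀ b ∈ A, ¬ G.Adj a b

open scoped Classical

/-- The quadratic Boolean function associated to the graph `G`. -/
noncomputable def gfun {n : ℕ} (G : SimpleGraph (Fin n)) (x : Fin n → ZMod 2) : ZMod 2 :=
  ∑ i, ∑ j, if i < j ∧ G.Adj i j then x i * x j else 0

/-- The real Hadamard kernel `H = (1/√2)[[1,1],[1,-1]]`, indexed by `ZMod 2`. -/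
noncomputable def HkerR (a b : ZMod 2) : ℝ := (-1 : ℝ) ^ (a.val * b.val) / Real.sqrt 2

lemma gfun_decomp {n : ℕ} (G : SimpleGraph (Fin n)) (A : Finset (Fin n)) (hA : isIndep G A)
    (k x : Fin n → ZMod 2) (hx : ∀ i ∉ A, x i = k i) :
    gfun G x = (∑ a ∈ A, x a * (∑ j, if G.Adj a j ∧ j ∉ A then k j else 0))
      + gfun G (fun i => if i ∈ A then 0 else k i) := by
  have key : ∀ i j : Fin n, (if i < j ∧ G.Adj i j then x i * x j else 0) =
      (if i < j ∧ G.Adj i j then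
          (if i ∈ A then 0 else k i) * (if j ∈ A then 0 else k j) else 0)
      + ((if (i < j ∧ G.Adj i j) ∧ i ∈ A ∧ j ∉ A then x i * k j else 0)
      + (if (i < j ∧ G.Adj i j) ∧ i ∉ A ∧ j ∈ A then k i * x j else 0)) := by
    intro i j
    by_cases h1 : i < j ∧ G.Adj i j
    · by_cases hiA : i ∈ A <;> by_cases hjA : j ∈ A
      · exact absurd h1.2 (hA i hiA j hjA)
      · simp [h1, hiA, hjA, hx j hjA]
      · simp [h1, hiA, hjA, hx i hiA]
      · simp [h1, hiA, hjA, hx i hiA, hx j hjA]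
    · simp [h1]
  have hD2 : ∑ i, ∑ j, (if (i < j ∧ G.Adj i j) ∧ i ∉ A ∧ j ∈ A then k i * x j else 0)
      = ∑ i, ∑ j, (if (j < i ∧ G.Adj j i) ∧ j ∉ A ∧ i ∈ A then k j * x i else 0) :=
    Finset.sum_comm
  have hT1 : ∀ i j : Fin n,
      (if (i < j ∧ G.Adj i j) ∧ i ∈ A ∧ j ∉ A then x i * k j else 0)
      + (if (j < i ∧ G.Adj j i) ∧ j ∉ A ∧ i ∈ A then k j * x i else 0)
      = (if i ∈ A ∧ G.Adj i j ∧ j ∉ A then x i * k j else 0) := by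
    intro i j
    by_cases hc : i ∈ A ∧ G.Adj i j ∧ j ∉ A
    · rcases lt_or_gt_of_ne hc.2.1.ne with hlt | hgt
      · simp [hc, hlt, hc.1, hc.2.1, hc.2.2, not_lt_of_gt hlt]
      · simp [hc, hgt, hc.1, hc.2.1.symm, hc.2.2, not_lt_of_gt hgt, mul_comm]
    · have e1 : ¬ ((i < j ∧ G.Adj i j) ∧ i ∈ A ∧ j ∉ A) := fun h => hc ⟨h.2.1, h.1.2, h.2.2⟩
      have e2 : ¬ ((j < i ∧ G.Adj j i) ∧ j ∉ A ∧ i ∈ A) := fun h => hc ⟨h.2.2, h.1.2.symm, h.2.1⟩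
      simp [e1, e2, hc]
  have hL : (∑ a ∈ A, x a * (∑ j, if G.Adj a j ∧ j ∉ A then k j else 0))
      = ∑ i, ∑ j, (if i ∈ A ∧ G.Adj i j ∧ j ∉ A then x i * k j else 0) := by
    have h1 : ∀ i : Fin n, ∑ j, (if i ∈ A ∧ G.Adj i j ∧ j ∉ A then x i * k j else 0)
        = if i ∈ A then x i * (∑ j, if G.Adj i j ∧ j ∉ A then k j else 0) else 0 := by
      intro i
      by_cases hi : i ∈ A
      · simp [hi, Finset.mul_sum, mul_ite, mul_zero]
      · simp [hi]
    rw [Finset.sum_congr rfl fun i _ => h1 i, Finset.sum_ite_mem, Finset.univ_inter]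
  calc gfun G x = ∑ i, ∑ j, ((if i < j ∧ G.Adj i j then
          (if i ∈ A then 0 else k i) * (if j ∈ A then 0 else k j) else 0)
      + ((if (i < j ∧ G.Adj i j) ∧ i ∈ A ∧ j ∉ A then x i * k j else 0)
      + (if (i < j ∧ G.Adj i j) ∧ i ∉ A ∧ j ∈ A then k i * x j else 0))) := by
        exact Finset.sum_congr rfl fun i _ => Finset.sum_congr rfl fun j _ => key i j
    _ = gfun G (fun i => if i ∈ A then 0 else k i)
        + ((∑ i, ∑ j, (if (i < j ∧ G.Adj i j) ∧ i ∈ A ∧ j ∉ A then x i * k j else 0))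
        + (∑ i, ∑ j, (if (i < j ∧ G.Adj i j) ∧ i ∉ A ∧ j ∈ A then k i * x j else 0))) := by
        simp only [Finset.sum_add_distrib]; rfl
    _ = (∑ a ∈ A, x a * (∑ j, if G.Adj a j ∧ j ∉ A then k j else 0))
        + gfun G (fun i => if i ∈ A then 0 else k i) := by
        rw [hD2, ← Finset.sum_add_distrib]
        simp only [← Finset.sum_add_distrib]
        rw [Finset.sum_congr rfl fun i _ => Finset.sum_congr rfl fun j _ => hT1 i j, ← hL,
          add_comm]
noncomputable def chi (u : ZMod 2) : ℝ := (-1 : ℝ) ^ u.val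

lemma chi_zero : chi 0 = 1 := rfl
lemma zval : (1 : ZMod 2).val = 1 := rfl
lemma zval2 : (2 : ZMod 2).val = 0 := rfl
lemma chi_add (u v : ZMod 2) : chi (u + v) = chi u * chi v := by
  rcases (by decide : ∀ w : ZMod 2, w = 0 ∨ w = 1) u with rfl | rfl <;>
    rcases (by decide : ∀ w : ZMod 2, w = 0 ∨ w = 1) v with rfl | rfl <;> norm_num [chi, zval, zval2]
lemma chi_mul_val (u v : ZMod 2) : (-1 : ℝ) ^ (u.val * v.val) = chi (u * v) := by
  rcases (by decide : ∀ w : ZMod 2, w = 0 ∨ w = 1) u with rfl | rfl <;>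
    rcases (by decide : ∀ w : ZMod 2, w = 0 ∨ w = 1) v with rfl | rfl <;> norm_num [chi, zval, zval2]
lemma chi_sq (u : ZMod 2) : chi u ^ 2 = 1 := by
  fin_cases u <;> norm_num [chi, zval, ZMod.val]
lemma one_add_chi_sq_le (u : ZMod 2) : (1 + chi u) ^ 2 ≤ 4 := by
  fin_cases u <;> norm_num [chi, zval, ZMod.val]
lemma chi_sum {ι : Type*} (s : Finset ι) (f : ι → ZMod 2) :
    chi (∑ i ∈ s, f i) = ∏ i ∈ s, chi (f i) := by
  induction s using Finset.induction_on with
  | empty => simp [chi_zero]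
  | insert _ _ h ih => rw [Finset.sum_insert h, Finset.prod_insert h, chi_add, ih]
lemma sum_zmod2 (g : ZMod 2 → ℝ) : ∑ b, g b = g 0 + g 1 := Fin.sum_univ_two g

lemma S_val {n : ℕ} (G : SimpleGraph (Fin n)) (A : Finset (Fin n))
    (hA : isIndep G A)
    (s : (Fin n → ZMod 2) → ℝ)
    (hs : ∀ x, s x = (-1 : ℝ) ^ (gfun G x).val / Real.sqrt 2 ^ n)
    (S : (Fin n → ZMod 2) → ℝ)
    (hS : ∀ k, S k = ∑ x, (∏ i, if i ∈ A then HkerR (k i) (x i)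
      else (if k i = x i then (1 : ℝ) else 0)) * s x) (k : Fin n → ZMod 2) :
    S k = chi (gfun G (fun i => if i ∈ A then 0 else k i))
        / (Real.sqrt 2 ^ n * Real.sqrt 2 ^ A.card)
      * ∏ a ∈ A, (1 + chi (k a + ∑ j, if G.Adj a j ∧ j ∉ A then k j else 0)) := by
  set L : Fin n → ZMod 2 := fun i => ∑ j, if G.Adj i j ∧ j ∉ A then k j else 0 with hLdef
  set C : ℝ := chi (gfun G (fun i => if i ∈ A then 0 else k i))
      / (Real.sqrt 2 ^ n * Real.sqrt 2 ^ A.card) with hCdef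
  set t : Fin n → Finset (ZMod 2) := fun i => if i ∈ A then Finset.univ else {k i} with htdef
  set v : Fin n → ZMod 2 → ℝ := fun i b => if i ∈ A then chi (b * (k i + L i)) else 1
    with hvdef
  have step1 : S k = ∑ x ∈ Fintype.piFinset t,
      (∏ i, if i ∈ A then HkerR (k i) (x i)
        else (if k i = x i then (1 : ℝ) else 0)) * s x := by
    rw [hS k]
    refine (Finset.sum_subset (Finset.subset_univ _) ?_).symm
    intro x _ hx
    rw [Fintype.mem_piFinset] at hx
    push_neg at hx
    obtain ⟨i, hi⟩ := hx
    have hiA : i ∉ A := by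
      intro h; apply hi; simp [htdef, h]
    have hki : ¬ (k i = x i) := by
      intro h; apply hi; simp [htdef, hiA, h.symm]
    have : (∏ i, if i ∈ A then HkerR (k i) (x i)
        else (if k i = x i then (1 : ℝ) else 0)) = 0 := by
      apply Finset.prod_eq_zero (Finset.mem_univ i)
      simp [hiA, hki]
    rw [this, zero_mul]
  have step2 : ∀ x ∈ Fintype.piFinset t,
      (∏ i, if i ∈ A then HkerR (k i) (x i)
        else (if k i = x i then (1 : ℝ) else 0)) * s x = C * ∏ i, v i (x i) := by
    intro x hx
    rw [Fintype.mem_piFinset] at hx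
    have hxk : ∀ i ∉ A, x i = k i := by
      intro i hi
      have := hx i
      simp [htdef, hi] at this
      exact this
    have ha : (∏ i, if i ∈ A then HkerR (k i) (x i)
        else (if k i = x i then (1 : ℝ) else 0))
        = (∏ i ∈ A, chi (k i * x i)) / Real.sqrt 2 ^ A.card := by
      have e1 : ∀ i : Fin n, (if i ∈ A then HkerR (k i) (x i)
          else (if k i = x i then (1 : ℝ) else 0))
          = (if i ∈ A then chi (k i * x i) / Real.sqrt 2 else 1) := by
        intro i
        by_cases hi : i ∈ A
        · simp [hi, HkerR, chi_mul_val]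
        · simp [hi, hxk i hi]
      rw [Finset.prod_congr rfl fun i _ => e1 i, Finset.prod_ite_mem, Finset.univ_inter,
        Finset.prod_div_distrib, Finset.prod_const]
    have hb : s x = (chi (gfun G (fun i => if i ∈ A then 0 else k i))
        * ∏ a ∈ A, chi (x a * L a)) / Real.sqrt 2 ^ n := by
      rw [hs x]
      have : gfun G x = (∑ a ∈ A, x a * L a)
          + gfun G (fun i => if i ∈ A then 0 else k i) := gfun_decomp G A hA k x hxk
      rw [show ((-1 : ℝ) ^ (gfun G x).val) = chi (gfun G x) from rfl, this, chi_add, chi_sum,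
        mul_comm]
    have hc : (∏ i ∈ A, chi (k i * x i)) * (∏ a ∈ A, chi (x a * L a))
        = ∏ i, v i (x i) := by
      rw [← Finset.prod_mul_distrib]
      have e2 : ∀ a ∈ A, chi (k a * x a) * chi (x a * L a) = chi (x a * (k a + L a)) := by
        intro a _
        rw [← chi_add, mul_add, mul_comm (k a) (x a)]
      rw [Finset.prod_congr rfl e2]
      have e3 : ∀ i : Fin n, v i (x i) = if i ∈ A then chi (x i * (k i + L i)) else 1 :=
        fun i => rfl
      rw [Finset.prod_congr rfl fun i _ => e3 i, Finset.prod_ite_mem, Finset.univ_inter]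
    rw [ha, hb, hCdef, ← hc]
    field_simp
  have step3 : ∑ x ∈ Fintype.piFinset t, ∏ i, v i (x i)
      = ∏ a ∈ A, (1 + chi (k a + L a)) := by
    rw [← Finset.prod_univ_sum]
    have e4 : ∀ i : Fin n, (∑ b ∈ t i, v i b)
        = if i ∈ A then (1 + chi (k i + L i)) else 1 := by
      intro i
      by_cases hi : i ∈ A
      · simp only [htdef, hvdef, hi, if_true]
        rw [sum_zmod2]
        rw [zero_mul, one_mul, chi_zero]
      · simp [htdef, hvdef, hi]
    rw [Finset.prod_congr rfl fun i _ => e4 i, Finset.prod_ite_mem, Finset.univ_inter]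
  rw [step1, Finset.sum_congr rfl step2, ← Finset.mul_sum, step3]

lemma sqrt2_pow_sq (m : ℕ) : (Real.sqrt 2 ^ m) ^ 2 = 2 ^ m := by
  rw [← pow_mul, mul_comm, pow_mul, Real.sq_sqrt (by norm_num : (0:ℝ) ≤ 2)]

lemma key_sq {n : ℕ} (α : ℕ) (g : ZMod 2) (P : ℝ) :
    (chi g / (Real.sqrt 2 ^ n * Real.sqrt 2 ^ α) * P) ^ 2 = P ^ 2 / (2 ^ n * 2 ^ α) := by
  rw [mul_pow, div_pow, mul_pow, sqrt2_pow_sq, sqrt2_pow_sq, chi_sq]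
  ring

lemma bound_eq {n α : ℕ} : ((2:ℝ) ^ α) ^ 2 / ((2:ℝ) ^ n * 2 ^ α) = (2:ℝ) ^ ((α : ℤ) - n) := by
  rw [zpow_sub₀ (by norm_num : (2:ℝ) ≠ 0), zpow_natCast, zpow_natCast]
  have h : ((2:ℝ) ^ α) ≠ 0 := by positivity
  field_simp

/-- Let `f` be the quadratic Boolean function of `G`, `A` an independent set of `G` of
size `α`, and `s = 2^{-n/2}(-1)^{f(x)}`.  Applying the Hadamard kernel to the coordinates
in `A` and the identity elsewhere, the resulting spectrum `S` has maximum squared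
coefficient magnitude exactly `2^{α - n}`. -/
theorem max_spectrum_indep_hadamard {n : ℕ} (G : SimpleGraph (Fin n)) (A : Finset (Fin n))
    (hA : isIndep G A)
    (s : (Fin n → ZMod 2) → ℝ)
    (hs : ∀ x, s x = (-1 : ℝ) ^ (gfun G x).val / Real.sqrt 2 ^ n)
    (S : (Fin n → ZMod 2) → ℝ)
    (hS : ∀ k, S k = ∑ x, (∏ i, if i ∈ A then HkerR (k i) (x i)
      else (if k i = x i then (1 : ℝ) else 0)) * s x) :
    IsGreatest (Set.range fun k => (S k) ^ 2) ((2 : ℝ) ^ ((A.card : ℤ) - (n : ℤ))) := by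
  constructor
  · refine ⟨fun _ => 0, ?_⟩
    have h := S_val G A hA s hs S hS (fun _ => 0)
    have e : ∀ a ∈ A, (1 + chi ((fun _ => (0:ZMod 2)) a
        + ∑ j, if G.Adj a j ∧ j ∉ A then (fun _ => (0:ZMod 2)) j else 0)) = 2 := by
      intro a _
      simp only [ite_self, Finset.sum_const_zero, add_zero, chi_zero]
      norm_num
    rw [Finset.prod_congr rfl e, Finset.prod_const] at h
    show S (fun _ => 0) ^ 2 = _
    rw [h, key_sq, bound_eq]
  · rintro y ⟨k, rfl⟩
    show S k ^ 2 ≤ _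
    rw [S_val G A hA s hs S hS k, key_sq, ← bound_eq]
    have hP : (∏ a ∈ A, (1 + chi (k a + ∑ j, if G.Adj a j ∧ j ∉ A then k j else 0))) ^ 2
        ≤ ((2:ℝ) ^ A.card) ^ 2 := by
      rw [← Finset.prod_pow]
      calc ∏ a ∈ A, (1 + chi (k a + ∑ j, if G.Adj a j ∧ j ∉ A then k j else 0)) ^ 2
          ≤ ∏ _a ∈ A, (4:ℝ) :=
            Finset.prod_le_prod (fun a _ => sq_nonneg _) (fun a _ => one_add_chi_sq_le _)
        _ = (4:ℝ) ^ A.card := Finset.prod_const _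
        _ = ((2:ℝ) ^ A.card) ^ 2 := by
            rw [← pow_mul, mul_comm, pow_mul]; norm_num
    gcongr
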